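/- Let μ ∈ ℝ^d, σ_1,…,σ_d > 0, and ε ≥ 0, and define for each nonzero w ∈ ℝ^d the adversarial accuracy acc_ε(f_w) = Ψ( (∑_j w_j μ_j − ε·‖w‖₁) / sqrt(∑_j σ_j² w_j²) ) and Δ(ε) = ∑_{j=1}^d σ_j^{−2}·((|μ_j| − ε)₊)². Then acc_ε(f_w) ≤ Ψ(sqrt(Δ(ε))) for every nonzero w, and if Δ(ε) > 0 equality holds for the most robust linear classifier whose weights are given by w_j = σ_j^{−2}·sign(μ_j)·(|μ_j| − ε)₊. In particular, the optimal adversarial accuracy among linear classifiers in the fading Gaussian model with diagonal covariance is Ψ(sqrt(Δ(ε))). -/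

import Mathlib

open Finset MeasureTheory

/-- Ψ : the cumulative distribution function of the standard Gaussian `N(0,1)`. -/
noncomputable def stdGaussCDF (a : ℝ) : ℝ :=
  ∫ t in Set.Iic a, (Real.sqrt (2 * Real.pi))⁻¹ * Real.exp (-t ^ 2 / 2)

/-- Adversarial accuracy of the linear classifier `f_w` in the fading Gaussian model,
`acc_ε(f_w) = Ψ((wᵀμ − ε‖w‖₁)/sqrt(∑ σ_j² w_j²))`. -/
noncomputable def accEps (d : ℕ) (μ σ : Fin d → ℝ) (ε : ℝ) (w : Fin d → ℝ) : ℝ :=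
  stdGaussCDF (((∑ j, w j * μ j) - ε * ∑ j, |w j|)
    / Real.sqrt (∑ j, (σ j) ^ 2 * w j ^ 2))

lemma stdGauss_integrable :
    Integrable (fun t : ℝ => (Real.sqrt (2 * Real.pi))⁻¹ * Real.exp (-t ^ 2 / 2)) := by
  have h : Integrable (fun t : ℝ => Real.exp (-(1/2 : ℝ) * t ^ 2)) :=
    integrable_exp_neg_mul_sq (by norm_num)
  have h2 := h.const_mul (Real.sqrt (2 * Real.pi))⁻¹
  have : ∀ t : ℝ, -t ^ 2 / 2 = -(1/2 : ℝ) * t ^ 2 := fun t => by ring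
  simpa [this] using h2

lemma stdGaussCDF_mono : Monotone stdGaussCDF := by
  intro a b hab
  refine setIntegral_mono_set stdGauss_integrable.integrableOn ?_ ?_
  · exact Filter.Eventually.of_forall fun t => by positivity
  · exact HasSubset.Subset.eventuallyLE (Set.Iic_subset_Iic.2 hab)

lemma mySignMulSelf (x : ℝ) : Real.sign x * x = |x| := by
  rcases lt_trichotomy x 0 with h | h | h
  · rw [Real.sign_of_neg h, abs_of_neg h]; ring
  · simp [h]
  · rw [Real.sign_of_pos h, abs_of_pos h]; ring

theorem stmt_10 (d : ℕ) (μ σ : Fin d → ℝ) (hσ : ∀ j, 0 < σ j)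
    (ε : ℝ) (hε : 0 ≤ ε) :
    (∀ w : Fin d → ℝ, w ≠ 0 →
      accEps d μ σ ε w
        ≤ stdGaussCDF (Real.sqrt (∑ j, ((σ j) ^ 2)⁻¹ * (max (|μ j| - ε) 0) ^ 2)))
    ∧ (0 < ∑ j, ((σ j) ^ 2)⁻¹ * (max (|μ j| - ε) 0) ^ 2 →
        (fun j => ((σ j) ^ 2)⁻¹ * Real.sign (μ j) * max (|μ j| - ε) 0) ≠ 0
        ∧ accEps d μ σ ε (fun j => ((σ j) ^ 2)⁻¹ * Real.sign (μ j) * max (|μ j| - ε) 0)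
            = stdGaussCDF (Real.sqrt (∑ j, ((σ j) ^ 2)⁻¹ * (max (|μ j| - ε) 0) ^ 2))) := by
  set m : Fin d → ℝ := fun j => max (|μ j| - ε) 0 with hm
  have hm0 : ∀ j, 0 ≤ m j := fun j => le_max_right _ _
  set Δ : ℝ := ∑ j, ((σ j) ^ 2)⁻¹ * m j ^ 2 with hΔ
  have hΔ0 : 0 ≤ Δ := Finset.sum_nonneg fun j _ => by positivity
  -- key: m j * (|μ j| - ε) = m j ^ 2
  have hmsq : ∀ j, m j * (|μ j| - ε) = m j ^ 2 := by
    intro j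
    rcases le_or_gt 0 (|μ j| - ε) with h | h
    · simp only [hm]; rw [max_eq_left h]; ring
    · simp only [hm]; rw [max_eq_right h.le]; ring
  constructor
  · intro w hw
    obtain ⟨j0, hj0⟩ := Function.ne_iff.mp hw
    replace hj0 : w j0 ≠ 0 := hj0
    have hS : 0 < ∑ j, (σ j) ^ 2 * w j ^ 2 := by
      have h1 : 0 < (σ j0) ^ 2 * w j0 ^ 2 :=
        mul_pos (pow_pos (hσ j0) 2)
          (lt_of_le_of_ne (sq_nonneg _) (Ne.symm (pow_ne_zero 2 hj0)))
      exact lt_of_lt_of_le h1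
        (Finset.single_le_sum (fun j _ => by positivity : ∀ j ∈ univ, (0:ℝ) ≤ (σ j) ^ 2 * w j ^ 2)
          (mem_univ j0))
    have hSq : 0 < Real.sqrt (∑ j, (σ j) ^ 2 * w j ^ 2) := Real.sqrt_pos.2 hS
    refine stdGaussCDF_mono ?_
    rw [div_le_iff₀ hSq]
    -- numerator bound
    have h1 : (∑ j, w j * μ j) - ε * ∑ j, |w j| ≤ ∑ j, |w j| * m j := by
      rw [Finset.mul_sum, ← Finset.sum_sub_distrib]
      refine Finset.sum_le_sum fun j _ => ?_
      have : w j * μ j - ε * |w j| ≤ |w j| * (|μ j| - ε) := by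
        have h2 : w j * μ j ≤ |w j| * |μ j| := by
          calc w j * μ j ≤ |w j * μ j| := le_abs_self _
          _ = |w j| * |μ j| := abs_mul _ _
        nlinarith
      refine this.trans (mul_le_mul_of_nonneg_left (le_max_left _ _) (abs_nonneg _))
    refine h1.trans ?_
    have h2 : ∀ j, |w j| * m j = (σ j * |w j|) * ((σ j)⁻¹ * m j) := by
      intro j
      rw [show (σ j * |w j|) * ((σ j)⁻¹ * m j) = (σ j * (σ j)⁻¹) * (|w j| * m j) by ring,
        mul_inv_cancel₀ (hσ j).ne', one_mul]
    rw [Finset.sum_congr rfl fun j _ => h2 j]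
    have h3 := Real.sum_mul_le_sqrt_mul_sqrt Finset.univ
      (fun j => σ j * |w j|) (fun j => (σ j)⁻¹ * m j)
    refine h3.trans ?_
    have e1 : ∀ j, (σ j * |w j|) ^ 2 = (σ j) ^ 2 * w j ^ 2 := fun j => by
      rw [mul_pow, sq_abs]
    have e2 : ∀ j, ((σ j)⁻¹ * m j) ^ 2 = ((σ j) ^ 2)⁻¹ * m j ^ 2 := fun j => by
      rw [mul_pow, inv_pow]
    rw [Finset.sum_congr rfl fun j _ => e1 j, Finset.sum_congr rfl fun j _ => e2 j]
    rw [mul_comm]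
  · intro hΔpos
    set w : Fin d → ℝ := fun j => ((σ j) ^ 2)⁻¹ * Real.sign (μ j) * m j with hwdef
    have hμ0 : ∀ j, μ j = 0 → m j = 0 := by
      intro j h
      simp only [hm, h, abs_zero, zero_sub]
      exact max_eq_right (by linarith)
    have hsgn : ∀ j, μ j ≠ 0 → |Real.sign (μ j)| = 1 := by
      intro j h
      rcases Real.sign_apply_eq_of_ne_zero _ h with h1 | h1 <;> simp [h1]
    -- the three sums
    have hA : (∑ j, w j * μ j) = ∑ j, ((σ j) ^ 2)⁻¹ * (m j * |μ j|) := by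
      refine Finset.sum_congr rfl fun j _ => ?_
      simp only [hwdef]
      rw [show ((σ j) ^ 2)⁻¹ * Real.sign (μ j) * m j * μ j
          = ((σ j) ^ 2)⁻¹ * (m j * (Real.sign (μ j) * μ j)) by ring, mySignMulSelf]
    have hB : (∑ j, |w j|) = ∑ j, ((σ j) ^ 2)⁻¹ * m j := by
      refine Finset.sum_congr rfl fun j _ => ?_
      by_cases h : μ j = 0
      · simp [hwdef, hμ0 j h]
      · simp only [hwdef]
        rw [abs_mul, abs_mul, abs_of_nonneg (hm0 j),
          abs_of_nonneg (by positivity : (0:ℝ) ≤ ((σ j) ^ 2)⁻¹), hsgn j h, mul_one]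
    have hC : (∑ j, (σ j) ^ 2 * w j ^ 2) = Δ := by
      refine Finset.sum_congr rfl fun j _ => ?_
      by_cases h : μ j = 0
      · simp [hwdef, hμ0 j h]
      · have hs : Real.sign (μ j) ^ 2 = 1 := by
          rcases Real.sign_apply_eq_of_ne_zero _ h with h1 | h1 <;> rw [h1] <;> norm_num
        have hσj := (hσ j).ne'
        simp only [hwdef]
        field_simp
        rw [hs]
        ring
    -- numerator equals Δ
    have hN : (∑ j, w j * μ j) - ε * ∑ j, |w j| = Δ := by
      rw [hA, hB, Finset.mul_sum, ← Finset.sum_sub_distrib, hΔ]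
      refine Finset.sum_congr rfl fun j _ => ?_
      rw [← hmsq j]
      ring
    have hwne : w ≠ 0 := by
      obtain ⟨j, -, hj⟩ := Finset.exists_lt_of_sum_lt (by simpa using hΔpos :
        (∑ _j : Fin d, (0:ℝ)) < ∑ j, ((σ j) ^ 2)⁻¹ * m j ^ 2)
      have hmj : m j ≠ 0 := by
        intro h; rw [h] at hj; simp at hj
      have hmjpos : 0 < m j := lt_of_le_of_ne (hm0 j) (Ne.symm hmj)
      have hμj : μ j ≠ 0 := by
        intro h
        exact hmj (hμ0 j h)
      intro h
      have := congrFun h j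
      simp only [hwdef, Pi.zero_apply] at this
      rcases mul_eq_zero.mp this with h1 | h1
      · rcases mul_eq_zero.mp h1 with h2 | h2
        · exact (inv_ne_zero (pow_ne_zero 2 (hσ j).ne')) h2
        · exact hμj (Real.sign_eq_zero_iff.mp h2)
      · exact hmj h1
    refine ⟨hwne, ?_⟩
    show stdGaussCDF _ = _
    rw [show (((∑ j, w j * μ j) - ε * ∑ j, |w j|)
        / Real.sqrt (∑ j, (σ j) ^ 2 * w j ^ 2)) = Δ / Real.sqrt Δ by rw [hN, hC],
      Real.div_sqrt]
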